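/- For every natural number n with n = 3 or n ≥ 5, the cycle graph ℤ_n is H-rigid. -/

import Mathlib

open SimpleGraph

/-- The link of a set `S` of vertices: all vertices adjacent to every vertex of `S`.
(For `S = ∅` this is all of `V`.) -/
def link {V : Type*} (G : SimpleGraph V) (S : Set V) : Set V :=
  {v : V | ∀ s ∈ S, G.Adj v s}

/-- A nonempty set of vertices is internal if its link is not a clique. -/
def IsInternalSet {V : Type*} (G : SimpleGraph V) (S : Set V) : Prop :=
  S.Nonempty ∧ ¬ G.IsClique (link G S)

/-- A vertex is internal if its neighborhood is not a clique. -/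
def IsInternalVertex {V : Type*} (G : SimpleGraph V) (v : V) : Prop :=
  ¬ G.IsClique (G.neighborSet v)

/-- The induced subgraph on the internal vertices. -/
def intGraph {V : Type*} (G : SimpleGraph V) :
    SimpleGraph ↥{v : V | IsInternalVertex G v} :=
  G.induce {v : V | IsInternalVertex G v}

/-- A graph is H-rigid if it is locally finite, all its internal sets are singletons,
and every nonempty finite set of vertices with nonempty link induces a subgraph all of
whose connected components are complete. -/
def HRigid {V : Type*} (G : SimpleGraph V) : Prop :=
  (∀ v : V, (G.neighborSet v).Finite) ∧
  (∀ S : Set V, IsInternalSet G S → ∃ v : V, S = {v}) ∧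
  (∀ S : Set V, S.Finite → S.Nonempty → (link G S).Nonempty →
    ∀ u w : ↥S, (G.induce S).Reachable u w → u = w ∨ (G.induce S).Adj u w)

/-- The eccentricity of a vertex: the sup of extended graph distances to all vertices. -/
noncomputable def eccentricity {V : Type*} (G : SimpleGraph V) (t : V) : ℕ∞ :=
  ⨆ s : V, G.edist t s

/-- The radius of a graph, valued in `ℕ∞`. -/
noncomputable def graphRadius {V : Type*} (G : SimpleGraph V) : ℕ∞ :=
  ⨅ t : V, eccentricity G t

/-- The infinite line graph on `ℤ`: `i` and `j` adjacent iff `|i - j| = 1`. -/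
def lineZ : SimpleGraph ℤ where
  Adj i j := |i - j| = 1
  symm := by constructor; intro i j h; rwa [abs_sub_comm]
  loopless := by constructor; intro i h; simp at h

/-- The cycle graph on `ZMod n`: `i` and `j` adjacent iff `i - j = 1` or `j - i = 1`. -/
def cycleZMod (n : ℕ) : SimpleGraph (ZMod n) :=
  SimpleGraph.circulantGraph ({1} : Set (ZMod n))

lemma natcast_ne_zero_zmod {n k : ℕ} (hk : 0 < k) (h : k < n) : ((k : ZMod n)) ≠ 0 := by
  intro hz
  rw [ZMod.natCast_eq_zero_iff] at hz
  have := Nat.le_of_dvd hk hz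
  omega

lemma cyc_adj_iff {n : ℕ} (hn : 3 ≤ n) (v a : ZMod n) :
    (cycleZMod n).Adj v a ↔ a = v - 1 ∨ a = v + 1 := by
  have : NeZero n := ⟨by omega⟩
  have h1 : (1 : ZMod n) ≠ 0 := by
    have := natcast_ne_zero_zmod (n := n) (k := 1) one_pos (by omega)
    simpa using this
  constructor
  · rintro ⟨hne, h | h⟩
    · simp only [Set.mem_singleton_iff] at h
      left; linear_combination -h
    · simp only [Set.mem_singleton_iff] at h
      right; linear_combination h
  · rintro (h | h) <;> subst h
    · exact ⟨fun h => h1 (by linear_combination h), Or.inl (by simp)⟩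
    · exact ⟨fun h => h1 (by linear_combination -h), Or.inr (by simp)⟩

lemma adj3 (x y : ZMod 3) (h : x ≠ y) : (cycleZMod 3).Adj x y := by
  rw [cyc_adj_iff (by norm_num)]
  revert h; revert x y; decide

/-- For `n = 3` or `n ≥ 5`, the cycle graph `ℤ_n` is H-rigid. -/
theorem stmt4 (n : ℕ) (hn : n = 3 ∨ 5 ≤ n) : HRigid (cycleZMod n) := by
  have hn3 : 3 ≤ n := by omega
  have : NeZero n := ⟨by omega⟩
  refine ⟨fun v => Set.toFinite _, ?_, ?_⟩
  · -- internal sets are singletons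
    rintro S ⟨⟨a, ha⟩, hnc⟩
    rcases hn with rfl | hn5
    · exact absurd (fun x _ y _ hxy => adj3 x y hxy) hnc
    · by_cases hsub : S.Subsingleton
      · exact ⟨a, Set.eq_singleton_iff_nonempty_unique_mem.mpr ⟨⟨a, ha⟩, fun x hx => hsub hx ha⟩⟩
      · exfalso
        apply hnc
        rw [Set.not_subsingleton_iff] at hsub
        obtain ⟨b, hb, c, hc, hbc⟩ := hsub
        have h4z : (4 : ZMod n) ≠ 0 := by
          have := natcast_ne_zero_zmod (n := n) (k := 4) (by norm_num) (by omega)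
          simpa using this
        have hss : (link (cycleZMod n) S).Subsingleton := by
          intro x hx y hy
          have h1 := (cyc_adj_iff hn3 x b).mp (hx b hb)
          have h2 := (cyc_adj_iff hn3 x c).mp (hx c hc)
          have h3 := (cyc_adj_iff hn3 y b).mp (hy b hb)
          have h4 := (cyc_adj_iff hn3 y c).mp (hy c hc)
          rcases h1 with h1 | h1 <;> rcases h2 with h2 | h2 <;>
            rcases h3 with h3 | h3 <;> rcases h4 with h4 | h4 <;>
            first
            | exact absurd (h1.trans h2.symm) hbc
            | linear_combination h3 - h1
            | linear_combination h4 - h2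
            | exact absurd (show (4 : ZMod n) = 0 by linear_combination h4 - h2 - h3 + h1) h4z
            | exact absurd (show (4 : ZMod n) = 0 by linear_combination h3 - h1 - h4 + h2) h4z
        exact hss.pairwise _
  · -- components of induced subgraphs are complete
    rintro S _ _ ⟨v, hv⟩ u w hreach
    rcases hn with rfl | hn5
    · by_cases huw : u = w
      · exact Or.inl huw
      · exact Or.inr (adj3 u w (fun h => huw (Subtype.ext h)))
    · have h1z : (1 : ZMod n) ≠ 0 := by
        have := natcast_ne_zero_zmod (n := n) (k := 1) one_pos (by omega)
        simpa using this
      have h3z : (3 : ZMod n) ≠ 0 := by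
        have := natcast_ne_zero_zmod (n := n) (k := 3) (by norm_num) (by omega)
        simpa using this
      have hedge : ∀ a b : ↥S, ¬ ((cycleZMod n).induce S).Adj a b := by
        rintro ⟨a, haS⟩ ⟨b, hbS⟩ hab
        have h1 := (cyc_adj_iff hn3 v a).mp (hv a haS)
        have h2 := (cyc_adj_iff hn3 v b).mp (hv b hbS)
        have h3 := (cyc_adj_iff hn3 a b).mp hab
        rcases h1 with h1 | h1 <;> rcases h2 with h2 | h2 <;> rcases h3 with h3 | h3 <;>
          first
          | exact h1z (by linear_combination h1 + h2 + h3)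
          | exact h1z (by linear_combination h1 + h2 - h3)
          | exact h1z (by linear_combination h1 - h2 + h3)
          | exact h1z (by linear_combination h1 - h2 - h3)
          | exact h1z (by linear_combination -h1 + h2 + h3)
          | exact h1z (by linear_combination -h1 + h2 - h3)
          | exact h1z (by linear_combination -h1 - h2 + h3)
          | exact h1z (by linear_combination -h1 - h2 - h3)
          | exact h3z (by linear_combination h1 + h2 + h3)
          | exact h3z (by linear_combination h1 + h2 - h3)
          | exact h3z (by linear_combination h1 - h2 + h3)
          | exact h3z (by linear_combination h1 - h2 - h3)
          | exact h3z (by linear_combination -h1 + h2 + h3)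
          | exact h3z (by linear_combination -h1 + h2 - h3)
          | exact h3z (by linear_combination -h1 - h2 + h3)
          | exact h3z (by linear_combination -h1 - h2 - h3)
      have hbot : (cycleZMod n).induce S = ⊥ := by
        ext a b
        simp only [SimpleGraph.bot_adj, iff_false]
        exact hedge a b
      rw [hbot] at hreach
      exact Or.inl (SimpleGraph.reachable_bot.mp hreach)
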